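/- The set of 'product symmetric polynomials' $\{\prod_{i=1}^N P(X_i) : P\in\mathbb{C}[X]\}$ spans the vector space of symmetric polynomials in $N$ variables over $\mathbb{C}$. -/

import Mathlib

open MvPolynomial Finset

lemma mem_span_of_dual {K M : Type*} [Field K] [AddCommGroup M] [Module K M]
    {s : Set M} {x : M}
    (h : ∀ f : Module.Dual K M, (∀ y ∈ s, f y = 0) → f x = 0) :
    x ∈ Submodule.span K s := by
  set p := Submodule.span K s
  rw [← Submodule.Quotient.mk_eq_zero p, ← Module.forall_dual_apply_eq_zero_iff K]
  intro g
  exact h (g.comp p.mkQ) fun y hy => by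
    have : p.mkQ y = 0 := (Submodule.Quotient.mk_eq_zero p).2 (Submodule.subset_span hy)
    simp [this]

noncomputable section

namespace SpanProdAux

variable {N D : ℕ}

/-- Exponent finsupp of a function `Fin N → Fin D`. -/
def toExp (g : Fin N → Fin D) : Fin N →₀ ℕ :=
  Finsupp.equivFunOnFinite.symm fun i => (g i : ℕ)

@[simp] lemma toExp_apply (g : Fin N → Fin D) (i : Fin N) : toExp g i = (g i : ℕ) := rfl

/-- Content (multiplicity vector) of `g`. -/
def cnt (g : Fin N → Fin D) : Fin D →₀ ℕ := ∑ i, Finsupp.single (g i) 1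

lemma cnt_comp (g : Fin N → Fin D) (σ : Equiv.Perm (Fin N)) : cnt (g ∘ σ) = cnt g :=
  Fintype.sum_equiv σ _ _ fun _ => rfl

lemma cnt_apply (g : Fin N → Fin D) (j : Fin D) :
    cnt g j = #{i | g i = j} := by
  rw [Finset.card_filter]
  simp only [cnt, Finsupp.finset_sum_apply, Finsupp.single_apply]


lemma exists_perm_of_cnt_eq {g g' : Fin N → Fin D} (h : cnt g = cnt g') :
    ∃ σ : Equiv.Perm (Fin N), g = g' ∘ σ := by
  have hcard : ∀ j, Fintype.card {i // g i = j} = Fintype.card {i // g' i = j} := by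
    intro j
    have h1 := congrArg (fun m => m j) h
    simp only [cnt_apply] at h1
    simpa [Fintype.card_subtype] using h1
  let e : ∀ j, {i // g i = j} ≃ {i // g' i = j} := fun j => Fintype.equivOfCardEq (hcard j)
  refine ⟨Equiv.ofFiberEquiv e, funext fun i => ?_⟩
  exact (Equiv.ofFiberEquiv_map e i).symm

lemma prod_X_cnt (g : Fin N → Fin D) :
    (∏ i, X (g i) : MvPolynomial (Fin D) ℂ) = monomial (cnt g) 1 := by
  classical
  rw [cnt]
  induction (Finset.univ : Finset (Fin N)) using Finset.induction with
  | empty => simp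
  | insert _ _ h ih =>
      rw [Finset.prod_insert h, Finset.sum_insert h, ih, X, monomial_mul, one_mul]

lemma prod_X_pow_toExp (g : Fin N → Fin D) :
    (∏ i, (X i : MvPolynomial (Fin N) ℂ) ^ (g i : ℕ)) = monomial (toExp g) 1 := by
  rw [monomial_eq, C_1, one_mul, Finsupp.prod_fintype]
  · rfl
  · intro i; exact pow_zero _

lemma key (f : Module.Dual ℂ (MvPolynomial (Fin N) ℂ))
    (hf : ∀ c : Fin D → ℂ,
      f (∏ i, Polynomial.aeval (X i)
          (∑ j : Fin D, Polynomial.C (c j) * Polynomial.X ^ (j : ℕ))) = 0)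
    (m : Fin D →₀ ℕ) :
    ∑ g ∈ Finset.univ.filter (fun g : Fin N → Fin D => cnt g = m),
      f (monomial (toExp g) 1) = 0 := by
  classical
  set Q : MvPolynomial (Fin D) ℂ :=
    ∑ g : Fin N → Fin D, monomial (cnt g) (f (monomial (toExp g) 1)) with hQ
  have heval : ∀ c : Fin D → ℂ, eval c Q = 0 := by
    intro c
    have hstep1 : ∀ i : Fin N,
        Polynomial.aeval (X i) (∑ j : Fin D, Polynomial.C (c j) * Polynomial.X ^ (j : ℕ))
          = ∑ j : Fin D, C (c j) * (X i : MvPolynomial (Fin N) ℂ) ^ (j : ℕ) := by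
      intro i
      simp [map_sum, algebraMap_eq]
    have hexp : (∏ i, Polynomial.aeval (X i)
          (∑ j : Fin D, Polynomial.C (c j) * Polynomial.X ^ (j : ℕ))
            : MvPolynomial (Fin N) ℂ)
        = ∑ g : Fin N → Fin D, (∏ i, c (g i)) • monomial (toExp g) 1 := by
      simp only [hstep1]
      rw [Finset.prod_univ_sum]
      rw [Fintype.piFinset_univ]
      refine Finset.sum_congr rfl fun g _ => ?_
      rw [Finset.prod_mul_distrib, ← map_prod, prod_X_pow_toExp, smul_eq_C_mul]
    have h0 : f (∑ g : Fin N → Fin D, (∏ i, c (g i)) • monomial (toExp g) 1) = 0 := by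
      rw [← hexp]; exact hf c
    rw [map_sum] at h0
    simp only [map_smul, smul_eq_mul] at h0
    rw [hQ, map_sum]
    rw [← h0]
    refine Finset.sum_congr rfl fun g _ => ?_
    rw [eval_monomial]
    rw [cnt, ← Finsupp.prod_finset_sum_index (by simp) (fun a b₁ b₂ => pow_add _ _ _)]
    have hsingle : ∀ a : Fin D,
        (Finsupp.single a (1:ℕ)).prod (fun n e => c n ^ e) = c a := fun a => by
      simp [Finsupp.prod_single_index]
    simp only [hsingle]
    ring
  have hQ0 : Q = 0 := MvPolynomial.funext fun x => by rw [heval x, map_zero]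
  have hc := congrArg (coeff m) hQ0
  rw [hQ, coeff_zero] at hc
  rw [coeff_sum] at hc
  simp only [coeff_monomial] at hc
  rw [Finset.sum_filter]
  exact hc

lemma sum_perm_eq_zero (f : Module.Dual ℂ (MvPolynomial (Fin N) ℂ)) (gd : Fin N → Fin D)
    (h : ∑ g ∈ Finset.univ.filter (fun g : Fin N → Fin D => cnt g = cnt gd),
      f (monomial (toExp g) 1) = 0) :
    ∑ σ : Equiv.Perm (Fin N), f (monomial (toExp (gd ∘ σ)) 1) = 0 := by
  classical
  have hcomp := Finset.sum_comp (s := (Finset.univ : Finset (Equiv.Perm (Fin N))))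
      (fun g : Fin N → Fin D => f (monomial (toExp g) 1)) (fun σ => gd ∘ σ)
  have himg : (Finset.univ : Finset (Equiv.Perm (Fin N))).image (fun σ : Equiv.Perm (Fin N) => gd ∘ ⇑σ)
      = Finset.univ.filter (fun g => cnt g = cnt gd) := by
    ext g
    simp only [Finset.mem_image, Finset.mem_filter, Finset.mem_univ, true_and]
    constructor
    · rintro ⟨σ, rfl⟩; exact cnt_comp gd σ
    · intro hg
      obtain ⟨σ, rfl⟩ := exists_perm_of_cnt_eq hg
      exact ⟨σ, rfl⟩
  rw [himg] at hcomp
  rw [hcomp]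
  have hconst : ∀ g ∈ Finset.univ.filter (fun g : Fin N → Fin D => cnt g = cnt gd),
      (#{σ : Equiv.Perm (Fin N) | gd ∘ ⇑σ = g} • f (monomial (toExp g) 1) : ℂ)
        = (#{σ : Equiv.Perm (Fin N) | gd ∘ ⇑σ = gd} : ℂ) * f (monomial (toExp g) 1) := by
    intro g hg
    rw [Finset.mem_filter] at hg
    obtain ⟨τ, rfl⟩ := exists_perm_of_cnt_eq hg.2
    rw [nsmul_eq_mul]
    congr 2
    refine Finset.card_equiv (Equiv.mulRight τ⁻¹) fun σ => ?_
    simp only [Finset.mem_filter, Finset.mem_univ, true_and, Equiv.coe_mulRight]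
    constructor
    · intro hσ
      funext i
      have h1 := congrFun hσ (τ⁻¹ i)
      simp only [Function.comp_apply, Equiv.Perm.inv_def, Equiv.apply_symm_apply] at h1
      simpa [Equiv.Perm.mul_apply] using h1
    · intro hσ
      funext i
      have := congrFun hσ (τ i)
      simpa [Equiv.Perm.mul_apply] using this
  rw [Finset.sum_congr rfl hconst, ← Finset.mul_sum, h, mul_zero]

end SpanProdAux

end

/-- The set of product symmetric polynomials `∏ᵢ P(Xᵢ)`, `P ∈ ℂ[X]`, spans the vector
space of symmetric polynomials in `N` variables over `ℂ`. -/
theorem span_product_symmetric (N : ℕ) :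
    Submodule.span ℂ
        {q : MvPolynomial (Fin N) ℂ |
          ∃ P : Polynomial ℂ, q = ∏ i : Fin N, Polynomial.aeval (X i) P}
      = Subalgebra.toSubmodule (symmetricSubalgebra (Fin N) ℂ) := by
  classical
  apply le_antisymm
  · rw [Submodule.span_le]
    rintro q ⟨P, rfl⟩
    rw [SetLike.mem_coe, Subalgebra.mem_toSubmodule, mem_symmetricSubalgebra]
    intro σ
    rw [map_prod]
    have hren : ∀ i, rename ⇑σ (Polynomial.aeval (X i : MvPolynomial (Fin N) ℂ) P)
        = Polynomial.aeval (X (σ i) : MvPolynomial (Fin N) ℂ) P := by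
      intro i
      rw [← Polynomial.aeval_algHom_apply
        (rename ⇑σ : MvPolynomial (Fin N) ℂ →ₐ[ℂ] MvPolynomial (Fin N) ℂ) (X i) P, rename_X]
    simp_rw [hren]
    exact Equiv.prod_comp σ fun j => Polynomial.aeval (X j) P
  · intro q hq
    rw [Subalgebra.mem_toSubmodule, mem_symmetricSubalgebra] at hq
    apply mem_span_of_dual
    intro f hfS
    set D := q.totalDegree + 1 with hD
    have hkey : ∀ m : Fin D →₀ ℕ,
        ∑ g ∈ Finset.univ.filter (fun g : Fin N → Fin D => SpanProdAux.cnt g = m),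
          f (monomial (SpanProdAux.toExp g) 1) = 0 :=
      SpanProdAux.key f (fun c => hfS _ ⟨_, rfl⟩)
    have hcard : ((Fintype.card (Equiv.Perm (Fin N)) : ℂ)) ≠ 0 :=
      Nat.cast_ne_zero.2 Fintype.card_ne_zero
    have hmain : (Fintype.card (Equiv.Perm (Fin N)) : ℂ) * f q = 0 := by
      have h1 : (Fintype.card (Equiv.Perm (Fin N)) : ℂ) * f q
          = ∑ σ : Equiv.Perm (Fin N), f (rename ⇑σ q) := by
        have h0 : ∑ σ : Equiv.Perm (Fin N), f (rename ⇑σ q)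
            = ∑ _σ : Equiv.Perm (Fin N), f q :=
          Finset.sum_congr rfl fun σ _ => by rw [hq σ]
        rw [h0, Finset.sum_const, Finset.card_univ, nsmul_eq_mul]
      have h2 : ∀ σ : Equiv.Perm (Fin N),
          f (rename ⇑σ q)
            = ∑ d ∈ q.support, coeff d q * f (monomial (Finsupp.mapDomain ⇑σ d) 1) := by
        intro σ
        conv_lhs => rw [q.as_sum, map_sum, map_sum]
        refine Finset.sum_congr rfl fun d _ => ?_
        rw [rename_monomial]
        have hmono : (monomial (Finsupp.mapDomain ⇑σ d)) (coeff d q)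
            = coeff d q • (monomial (Finsupp.mapDomain ⇑σ d)) (1 : ℂ) := by
          rw [smul_monomial, smul_eq_mul, mul_one]
        rw [hmono, map_smul, smul_eq_mul]
      rw [h1, Finset.sum_congr rfl fun σ _ => h2 σ, Finset.sum_comm]
      refine Finset.sum_eq_zero fun d hd => ?_
      have hlt : ∀ i, d i < D := by
        intro i
        have h3 : d i ≤ d.sum fun _ e => e := by
          by_cases h : d i = 0
          · simp [h]
          · exact Finset.single_le_sum (f := fun j => d j) (fun _ _ => Nat.zero_le _)
              (Finsupp.mem_support_iff.2 h)
        exact Nat.lt_succ_of_le (h3.trans (le_totalDegree hd))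
      set gd : Fin N → Fin D := fun i => ⟨d i, hlt i⟩ with hgd
      have hmap : ∀ σ : Equiv.Perm (Fin N),
          Finsupp.mapDomain ⇑σ d = SpanProdAux.toExp (gd ∘ ⇑σ⁻¹) := by
        intro σ
        ext j
        rw [SpanProdAux.toExp_apply, Finsupp.mapDomain_equiv_apply]
        rfl
      simp_rw [hmap]
      rw [← Finset.mul_sum]
      have hinv : ∑ σ : Equiv.Perm (Fin N), f (monomial (SpanProdAux.toExp (gd ∘ ⇑σ⁻¹)) 1)
          = ∑ σ : Equiv.Perm (Fin N), f (monomial (SpanProdAux.toExp (gd ∘ ⇑σ)) 1) :=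
        Equiv.sum_comp (Equiv.inv (Equiv.Perm (Fin N)))
          (fun σ => f (monomial (SpanProdAux.toExp (gd ∘ ⇑σ)) 1))
      rw [hinv, SpanProdAux.sum_perm_eq_zero f gd (hkey _), mul_zero]
    exact (mul_eq_zero.1 hmain).resolve_left hcard
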